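/- Let (A, A*) be a tridiagonal pair on V with eigenspace orderings V_0, ..., V_d of A and V*_0, ..., V*_d of A*, and let D denote the subalgebra of End(V) generated by A. Then the following are equivalent: (i) there exists a nonzero X ∈ D such that X V*_0 ⊆ V*_d; (ii) every eigenspace V_i of A and every eigenspace V*_i of A* has dimension 1 over K (that is, (A, A*) is a Leonard pair). -/

import Mathlib

open Polynomial

/-- A tridiagonal pair on `V`, with eigenspace orderings `Ev 0, ..., Ev d` of `A`
(with eigenvalues `θ 0, ..., θ d`) and `Ew 0, ..., Ew d` of `B = A*`
(with eigenvalues `θ' 0, ..., θ' d`).  For indices `i > d` we set `Ev i = ⊥`,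
`Ew i = ⊥`, encoding the conventions `V_{-1} = 0`, `V_{d+1} = 0`
(note `Ev (0 - 1) = Ev 0` by truncated subtraction, which is harmless in the
tridiagonal conditions below since `Ev i` appears in the sum anyway). -/
structure TridiagonalPair (K V : Type*) [Field K] [AddCommGroup V] [Module K V]
    [FiniteDimensional K V] where
  A : Module.End K V
  B : Module.End K V
  d : ℕ
  Ev : ℕ → Submodule K V
  Ew : ℕ → Submodule K V
  θ : ℕ → K
  θ' : ℕ → K
  hEv_eig : ∀ i ≤ d, Ev i = Module.End.eigenspace A (θ i)
  hEv_ne : ∀ i ≤ d, Ev i ≠ ⊥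
  hEv_all : ∀ μ : K, Module.End.eigenspace A μ ≠ ⊥ → ∃ i ≤ d, θ i = μ
  hθ_inj : ∀ i ≤ d, ∀ j ≤ d, θ i = θ j → i = j
  hEv_top : (⨆ i ∈ Finset.range (d + 1), Ev i) = ⊤
  hEv_bot : ∀ i, d < i → Ev i = ⊥
  hEw_eig : ∀ i ≤ d, Ew i = Module.End.eigenspace B (θ' i)
  hEw_ne : ∀ i ≤ d, Ew i ≠ ⊥
  hEw_all : ∀ μ : K, Module.End.eigenspace B μ ≠ ⊥ → ∃ i ≤ d, θ' i = μ
  hθ'_inj : ∀ i ≤ d, ∀ j ≤ d, θ' i = θ' j → i = j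
  hEw_top : (⨆ i ∈ Finset.range (d + 1), Ew i) = ⊤
  hEw_bot : ∀ i, d < i → Ew i = ⊥
  hTriB : ∀ i ≤ d, ∀ v ∈ Ev i, B v ∈ Ev (i - 1) ⊔ Ev i ⊔ Ev (i + 1)
  hTriA : ∀ i ≤ d, ∀ v ∈ Ew i, A v ∈ Ew (i - 1) ⊔ Ew i ⊔ Ew (i + 1)
  hIrr : ∀ W : Submodule K V, (∀ v ∈ W, A v ∈ W) → (∀ v ∈ W, B v ∈ W) →
    W = ⊥ ∨ W = ⊤

/-- The polynomial `τ_i = (λ - θ_0)(λ - θ_1) ⋯ (λ - θ_{i-1})`. -/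
noncomputable def tau {K : Type*} [Field K] (θ : ℕ → K) (i : ℕ) : Polynomial K :=
  ∏ k ∈ Finset.range i, (X - C (θ k))

namespace TDPaux

variable {K V : Type*} [Field K] [AddCommGroup V] [Module K V] [FiniteDimensional K V]
variable (p : TridiagonalPair K V)

/-- `F_j = V*_0 + ⋯ + V*_j`. -/
def Fl (j : ℕ) : Submodule K V := ⨆ h ∈ Finset.range (j+1), p.Ew h
/-- `G_j = V_j + ⋯ + V_d`. -/
def Gl (j : ℕ) : Submodule K V := ⨆ h ∈ Finset.Ico j (p.d+1), p.Ev h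
/-- `G'_j = V_0 + ⋯ + V_j`. -/
def Gl' (j : ℕ) : Submodule K V := ⨆ h ∈ Finset.range (j+1), p.Ev h
/-- `U_i = F_i ⊓ G_i`. -/
def U (i : ℕ) : Submodule K V := Fl p i ⊓ Gl p i

lemma Ew_le_Fl {h j : ℕ} (hle : h ≤ j) : p.Ew h ≤ Fl p j :=
  le_iSup₂_of_le h (Finset.mem_range.2 (by omega)) le_rfl

lemma Ev_le_Gl {h j : ℕ} (hle : j ≤ h) : p.Ev h ≤ Gl p j := by
  rcases le_or_gt h p.d with hd | hd
  · exact le_iSup₂_of_le h (Finset.mem_Ico.2 ⟨hle, by omega⟩) le_rfl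
  · rw [p.hEv_bot h hd]; exact bot_le

lemma Ev_le_Gl' {h j : ℕ} (hle : h ≤ j) : p.Ev h ≤ Gl' p j :=
  le_iSup₂_of_le h (Finset.mem_range.2 (by omega)) le_rfl

lemma Fl_mono {j j' : ℕ} (h : j ≤ j') : Fl p j ≤ Fl p j' :=
  iSup₂_le fun i hi => Ew_le_Fl p (by simp only [Finset.mem_range] at hi; omega)

lemma Gl_anti {j j' : ℕ} (h : j ≤ j') : Gl p j' ≤ Gl p j :=
  iSup₂_le fun i hi => Ev_le_Gl p (by simp only [Finset.mem_Ico] at hi; omega)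

lemma Gl'_mono {j j' : ℕ} (h : j ≤ j') : Gl' p j ≤ Gl' p j' :=
  iSup₂_le fun i hi => Ev_le_Gl' p (by simp only [Finset.mem_range] at hi; omega)

lemma Fl_zero : Fl p 0 = p.Ew 0 := by
  simp [Fl, Finset.range_one]

lemma Gl'_zero : Gl' p 0 = p.Ev 0 := by
  simp [Gl', Finset.range_one]

lemma Fl_top : Fl p p.d = ⊤ := p.hEw_top

lemma Gl_zero_top : Gl p 0 = ⊤ := by
  rw [Gl, ← Finset.range_eq_Ico]; exact p.hEv_top

lemma Gl'_top : Gl' p p.d = ⊤ := p.hEv_top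

lemma Gl_succ_d : Gl p (p.d + 1) = ⊥ := by
  simp [Gl]

lemma U_zero : U p 0 = p.Ew 0 := by
  rw [U, Fl_zero, Gl_zero_top, inf_top_eq]

lemma mem_Ev {i : ℕ} (hi : i ≤ p.d) {v : V} : v ∈ p.Ev i ↔ p.A v = p.θ i • v := by
  rw [p.hEv_eig i hi]; exact Module.End.mem_eigenspace_iff

lemma mem_Ew {i : ℕ} (hi : i ≤ p.d) {v : V} : v ∈ p.Ew i ↔ p.B v = p.θ' i • v := by
  rw [p.hEw_eig i hi]; exact Module.End.mem_eigenspace_iff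

lemma pow_Ev {i : ℕ} (hi : i ≤ p.d) {v : V} (hv : v ∈ p.Ev i) (n : ℕ) :
    (p.A ^ n) v = p.θ i ^ n • v := by
  induction n with
  | zero => simp
  | succ n ih =>
      rw [pow_succ, Module.End.mul_apply, (mem_Ev p hi).1 hv, map_smul, ih,
        pow_succ, smul_smul, mul_comm]

lemma aeval_Ev {i : ℕ} (hi : i ≤ p.d) {v : V} (hv : v ∈ p.Ev i) (q : K[X]) :
    (aeval p.A q) v = q.eval (p.θ i) • v := by
  induction q using Polynomial.induction_on' with
  | add f g hf hg => rw [map_add, LinearMap.add_apply, hf, hg, eval_add, add_smul]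
  | monomial n a =>
      rw [aeval_monomial, Module.End.mul_apply, pow_Ev p hi hv, map_smul,
        Module.algebraMap_end_apply, eval_monomial, smul_smul, mul_comm]

lemma A_Fl (j : ℕ) : Fl p j ≤ (Fl p (j+1)).comap p.A := by
  refine iSup₂_le fun h hh v hv => ?_
  simp only [Finset.mem_range] at hh
  simp only [Submodule.mem_comap]
  rcases le_or_gt h p.d with hd | hd
  · exact (sup_le (sup_le (Ew_le_Fl p (by omega)) (Ew_le_Fl p (by omega)))
      (Ew_le_Fl p (by omega))) (p.hTriA h hd v hv)
  · rw [p.hEw_bot h hd, Submodule.mem_bot] at hv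
    simp [hv]

lemma B_Fl (j : ℕ) : Fl p j ≤ (Fl p (j-1)).comap (p.B - p.θ' j • 1) := by
  refine iSup₂_le fun h hh v hv => ?_
  simp only [Finset.mem_range] at hh
  simp only [Submodule.mem_comap, LinearMap.sub_apply, LinearMap.smul_apply, Module.End.one_apply]
  rcases le_or_gt h p.d with hd | hd
  · rw [(mem_Ew p hd).1 hv, ← sub_smul]
    rcases eq_or_ne h j with rfl | hne
    · simp
    · exact Ew_le_Fl p (by omega) (Submodule.smul_mem _ _ hv)
  · rw [p.hEw_bot h hd, Submodule.mem_bot] at hv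
    simp [hv]

lemma A_Gl (j : ℕ) : Gl p j ≤ (Gl p (j+1)).comap (p.A - p.θ j • 1) := by
  refine iSup₂_le fun h hh v hv => ?_
  simp only [Finset.mem_Ico] at hh
  simp only [Submodule.mem_comap, LinearMap.sub_apply, LinearMap.smul_apply, Module.End.one_apply]
  have hd : h ≤ p.d := by omega
  rw [(mem_Ev p hd).1 hv, ← sub_smul]
  rcases eq_or_ne h j with rfl | hne
  · simp
  · exact Ev_le_Gl p (by omega) (Submodule.smul_mem _ _ hv)

lemma B_Gl (j : ℕ) : Gl p j ≤ (Gl p (j-1)).comap p.B := by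
  refine iSup₂_le fun h hh v hv => ?_
  simp only [Finset.mem_Ico] at hh
  have hd : h ≤ p.d := by omega
  simp only [Submodule.mem_comap]
  exact (sup_le (sup_le (Ev_le_Gl p (by omega)) (Ev_le_Gl p (by omega)))
    (Ev_le_Gl p (by omega))) (p.hTriB h hd v hv)

lemma A_Gl' (j : ℕ) : Gl' p j ≤ (Gl' p (j-1)).comap (p.A - p.θ j • 1) := by
  refine iSup₂_le fun h hh v hv => ?_
  simp only [Finset.mem_range] at hh
  simp only [Submodule.mem_comap, LinearMap.sub_apply, LinearMap.smul_apply, Module.End.one_apply]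
  rcases le_or_gt h p.d with hd | hd
  · rw [(mem_Ev p hd).1 hv, ← sub_smul]
    rcases eq_or_ne h j with rfl | hne
    · simp
    · exact Ev_le_Gl' p (by omega) (Submodule.smul_mem _ _ hv)
  · rw [p.hEv_bot h hd, Submodule.mem_bot] at hv
    simp [hv]

lemma B_Gl' (j : ℕ) : Gl' p j ≤ (Gl' p (j+1)).comap p.B := by
  refine iSup₂_le fun h hh v hv => ?_
  simp only [Finset.mem_range] at hh
  simp only [Submodule.mem_comap]
  rcases le_or_gt h p.d with hd | hd
  · exact (sup_le (sup_le (Ev_le_Gl' p (by omega)) (Ev_le_Gl' p (by omega)))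
      (Ev_le_Gl' p (by omega))) (p.hTriB h hd v hv)
  · rw [p.hEv_bot h hd, Submodule.mem_bot] at hv
    simp [hv]

lemma aeval_Gl (q : K[X]) (j : ℕ) : Gl p j ≤ (Gl p j).comap (aeval p.A q) := by
  refine iSup₂_le fun h hh v hv => ?_
  simp only [Finset.mem_Ico] at hh
  have hd : h ≤ p.d := by omega
  simp only [Submodule.mem_comap]
  rw [aeval_Ev p hd hv]
  exact Ev_le_Gl p (by omega) (Submodule.smul_mem _ _ hv)

lemma aeval_Gl' (q : K[X]) (j : ℕ) : Gl' p j ≤ (Gl' p j).comap (aeval p.A q) := by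
  refine iSup₂_le fun h hh v hv => ?_
  simp only [Finset.mem_range] at hh
  simp only [Submodule.mem_comap]
  rcases le_or_gt h p.d with hd | hd
  · rw [aeval_Ev p hd hv]
    exact Ev_le_Gl' p (by omega) (Submodule.smul_mem _ _ hv)
  · rw [p.hEv_bot h hd, Submodule.mem_bot] at hv
    simp [hv]

lemma U_raise (i : ℕ) : ∀ v ∈ U p i, (p.A - p.θ i • 1) v ∈ U p (i+1) := by
  intro v hv
  rw [U, Submodule.mem_inf] at hv ⊢
  refine ⟨?_, Submodule.mem_comap.1 (A_Gl p i hv.2)⟩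
  simp only [LinearMap.sub_apply, LinearMap.smul_apply, Module.End.one_apply]
  exact Submodule.sub_mem _ (Submodule.mem_comap.1 (A_Fl p i hv.1))
    (Fl_mono p (Nat.le_succ i) (Submodule.smul_mem _ _ hv.1))

lemma U_lower (i : ℕ) : ∀ v ∈ U p i, (p.B - p.θ' i • 1) v ∈ U p (i-1) := by
  intro v hv
  rw [U, Submodule.mem_inf] at hv ⊢
  refine ⟨Submodule.mem_comap.1 (B_Fl p i hv.1), ?_⟩
  simp only [LinearMap.sub_apply, LinearMap.smul_apply, Module.End.one_apply]
  exact Submodule.sub_mem _ (Submodule.mem_comap.1 (B_Gl p i hv.2))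
    (Gl_anti p (Nat.sub_le i 1) (Submodule.smul_mem _ _ hv.2))

lemma tau_succ (θf : ℕ → K) (i : ℕ) : tau θf (i+1) = (X - C (θf i)) * tau θf i := by
  rw [tau, Finset.prod_range_succ, mul_comm, tau]

lemma aeval_tau_succ (i : ℕ) (v : V) :
    (aeval p.A (tau p.θ (i+1))) v = (p.A - p.θ i • 1) ((aeval p.A (tau p.θ i)) v) := by
  rw [tau_succ, map_mul, Module.End.mul_apply,
    show (aeval p.A (X - C (p.θ i))) = p.A - p.θ i • 1 by
      rw [map_sub, aeval_X, aeval_C, Algebra.algebraMap_eq_smul_one]]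

lemma u_mem {v : V} (hv : v ∈ p.Ew 0) : ∀ i, (aeval p.A (tau p.θ i)) v ∈ U p i := by
  intro i
  induction i with
  | zero => rw [U_zero]; simpa [tau] using hv
  | succ i ih => rw [aeval_tau_succ]; exact U_raise p i _ ih

lemma aeval_tau_top : aeval p.A (tau p.θ (p.d+1)) = 0 := by
  have hker : (⊤ : Submodule K V) ≤ LinearMap.ker (aeval p.A (tau p.θ (p.d+1))) := by
    rw [← p.hEv_top]
    refine iSup₂_le fun h hh v hv => ?_
    have hd : h ≤ p.d := by simp only [Finset.mem_range] at hh; omega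
    have hev : (tau p.θ (p.d+1)).eval (p.θ h) = 0 := by
      rw [tau, eval_prod]
      exact Finset.prod_eq_zero hh (by simp)
    rw [LinearMap.mem_ker, aeval_Ev p hd hv, hev, zero_smul]
  exact LinearMap.ext fun v => by simpa using LinearMap.mem_ker.1 (hker trivial)

lemma disj_Ev {j : ℕ} (hj : j ≤ p.d) (s : Finset ℕ) (hs : ∀ h ∈ s, h ≠ j) :
    Disjoint (p.Ev j) (⨆ h ∈ s, p.Ev h) := by
  have hind := Module.End.eigenspaces_iSupIndep p.A (p.θ j)
  rw [p.hEv_eig j hj]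
  refine hind.mono_right (iSup₂_le fun h hh => ?_)
  rcases le_or_gt h p.d with hd | hd
  · have hne : p.θ h ≠ p.θ j := fun he => hs h hh (p.hθ_inj h hd j hj he)
    rw [p.hEv_eig h hd]
    exact le_iSup₂_of_le (p.θ h) hne le_rfl
  · rw [p.hEv_bot h hd]; exact bot_le

lemma disj_Ew {j : ℕ} (hj : j ≤ p.d) (s : Finset ℕ) (hs : ∀ h ∈ s, h ≠ j) :
    Disjoint (p.Ew j) (⨆ h ∈ s, p.Ew h) := by
  have hind := Module.End.eigenspaces_iSupIndep p.B (p.θ' j)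
  rw [p.hEw_eig j hj]
  refine hind.mono_right (iSup₂_le fun h hh => ?_)
  rcases le_or_gt h p.d with hd | hd
  · have hne : p.θ' h ≠ p.θ' j := fun he => hs h hh (p.hθ'_inj h hd j hj he)
    rw [p.hEw_eig h hd]
    exact le_iSup₂_of_le (p.θ' h) hne le_rfl
  · rw [p.hEw_bot h hd]; exact bot_le

lemma cv1 (i : ℕ) : Fl p i ⊓ Gl p (i+1) = ⊥ := by
  set T : Submodule K V := ⨆ k, (Fl p k ⊓ Gl p (k+1)) with hT
  have hle : ∀ k, Fl p k ⊓ Gl p (k+1) ≤ T := fun k => by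
    rw [hT]; exact le_iSup (fun k => Fl p k ⊓ Gl p (k+1)) k
  have hAle : T ≤ T.comap p.A := by
    rw [hT]
    refine iSup_le fun k => fun w hw => Submodule.mem_comap.2 ?_
    rw [← hT]
    have h1 : (p.A - p.θ (k+1) • 1) w ∈ Fl p (k+1) ⊓ Gl p (k+2) := by
      refine Submodule.mem_inf.2 ⟨?_, Submodule.mem_comap.1 (A_Gl p (k+1) hw.2)⟩
      simp only [LinearMap.sub_apply, LinearMap.smul_apply, Module.End.one_apply]
      exact Submodule.sub_mem _ (Submodule.mem_comap.1 (A_Fl p k hw.1))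
        (Fl_mono p (Nat.le_succ k) (Submodule.smul_mem _ _ hw.1))
    have h2 : p.A w = (p.A - p.θ (k+1) • 1) w + p.θ (k+1) • w := by
      simp only [LinearMap.sub_apply, LinearMap.smul_apply, Module.End.one_apply]
      abel
    rw [h2]
    exact Submodule.add_mem _ (hle (k+1) h1) (hle k (Submodule.smul_mem _ _ hw))
  have hBle : T ≤ T.comap p.B := by
    rw [hT]
    refine iSup_le fun k => fun w hw => Submodule.mem_comap.2 ?_
    rw [← hT]
    rcases Nat.eq_zero_or_pos k with rfl | hk
    · have hw0 : w ∈ p.Ew 0 := by have := hw.1; rwa [Fl_zero] at this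
      rw [(mem_Ew p (Nat.zero_le _)).1 hw0]
      exact hle 0 (Submodule.smul_mem _ _ hw)
    · have h1 : (p.B - p.θ' k • 1) w ∈ Fl p (k-1) ⊓ Gl p k := by
        refine Submodule.mem_inf.2 ⟨Submodule.mem_comap.1 (B_Fl p k hw.1), ?_⟩
        simp only [LinearMap.sub_apply, LinearMap.smul_apply, Module.End.one_apply]
        exact Submodule.sub_mem _ (Submodule.mem_comap.1 (B_Gl p (k+1) hw.2))
          (Gl_anti p (Nat.le_succ k) (Submodule.smul_mem _ _ hw.2))
      have h2 : p.B w = (p.B - p.θ' k • 1) w + p.θ' k • w := by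
        simp only [LinearMap.sub_apply, LinearMap.smul_apply, Module.End.one_apply]
        abel
      have hk1 : k - 1 + 1 = k := by omega
      rw [h2]
      refine Submodule.add_mem _ (hle (k-1) ?_) (hle k (Submodule.smul_mem _ _ hw))
      rwa [hk1]
  rcases p.hIrr T (fun v hv => hAle hv) (fun v hv => hBle hv) with hbot | htop
  · exact le_bot_iff.1 (hbot ▸ hle i)
  · exfalso
    have hTle : T ≤ Gl p 1 := iSup_le fun k => inf_le_right.trans (Gl_anti p (by omega))
    rw [htop] at hTle
    have hEv0 : p.Ev 0 ≤ Gl p 1 := le_top.trans hTle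
    have hdisj : Disjoint (p.Ev 0) (Gl p 1) := disj_Ev p (Nat.zero_le _) _
      (fun h hh => by simp only [Finset.mem_Ico] at hh; omega)
    exact p.hEv_ne 0 (Nat.zero_le _) (hdisj.eq_bot_of_le hEv0)

lemma cv2 (hd : 1 ≤ p.d) : p.Ew 0 ⊓ Gl' p (p.d - 1) = ⊥ := by
  set T : Submodule K V := ⨆ k, ⨆ (_ : k < p.d), (Fl p k ⊓ Gl' p (p.d - 1 - k)) with hT
  have hle : ∀ k, k < p.d → Fl p k ⊓ Gl' p (p.d - 1 - k) ≤ T := fun k hk => by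
    rw [hT]; exact le_iSup₂_of_le k hk le_rfl
  have hAle : T ≤ T.comap p.A := by
    rw [hT]
    refine iSup₂_le fun k hk => fun w hw => Submodule.mem_comap.2 ?_
    rw [← hT]
    rcases eq_or_lt_of_le (Nat.succ_le_of_lt hk) with hk1 | hk1
    · -- k = d - 1 : w ∈ Gl' 0 = Ev 0
      have hj0 : p.d - 1 - k = 0 := by omega
      have hw0 : w ∈ p.Ev 0 := by
        have := hw.2; rwa [hj0, Gl'_zero] at this
      rw [(mem_Ev p (Nat.zero_le _)).1 hw0]
      exact hle k hk (Submodule.smul_mem _ _ hw)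
    · -- k + 1 < d
      have h1 : (p.A - p.θ (p.d - 1 - k) • 1) w ∈ Fl p (k+1) ⊓ Gl' p (p.d - 1 - (k+1)) := by
        refine Submodule.mem_inf.2 ⟨?_, ?_⟩
        · simp only [LinearMap.sub_apply, LinearMap.smul_apply, Module.End.one_apply]
          exact Submodule.sub_mem _ (Submodule.mem_comap.1 (A_Fl p k hw.1))
            (Fl_mono p (Nat.le_succ k) (Submodule.smul_mem _ _ hw.1))
        · have := Submodule.mem_comap.1 (A_Gl' p (p.d - 1 - k) hw.2)
          have harith : p.d - 1 - k - 1 = p.d - 1 - (k+1) := by omega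
          rwa [harith] at this
      have h2 : p.A w = (p.A - p.θ (p.d - 1 - k) • 1) w + p.θ (p.d - 1 - k) • w := by
        simp only [LinearMap.sub_apply, LinearMap.smul_apply, Module.End.one_apply]
        abel
      rw [h2]
      exact Submodule.add_mem _ (hle (k+1) (by omega) h1)
        (hle k hk (Submodule.smul_mem _ _ hw))
  have hBle : T ≤ T.comap p.B := by
    rw [hT]
    refine iSup₂_le fun k hk => fun w hw => Submodule.mem_comap.2 ?_
    rw [← hT]
    rcases Nat.eq_zero_or_pos k with rfl | hkpos
    · have hw0 : w ∈ p.Ew 0 := by have := hw.1; rwa [Fl_zero] at this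
      rw [(mem_Ew p (Nat.zero_le _)).1 hw0]
      exact hle 0 hk (Submodule.smul_mem _ _ hw)
    · have h1 : (p.B - p.θ' k • 1) w ∈ Fl p (k-1) ⊓ Gl' p (p.d - 1 - (k-1)) := by
        refine Submodule.mem_inf.2 ⟨Submodule.mem_comap.1 (B_Fl p k hw.1), ?_⟩
        simp only [LinearMap.sub_apply, LinearMap.smul_apply, Module.End.one_apply]
        have hB := Submodule.mem_comap.1 (B_Gl' p (p.d - 1 - k) hw.2)
        have harith : p.d - 1 - k + 1 = p.d - 1 - (k-1) := by omega
        rw [← harith]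
        exact Submodule.sub_mem _ hB
          (Gl'_mono p (Nat.le_succ _) (Submodule.smul_mem _ _ hw.2))
      have h2 : p.B w = (p.B - p.θ' k • 1) w + p.θ' k • w := by
        simp only [LinearMap.sub_apply, LinearMap.smul_apply, Module.End.one_apply]
        abel
      rw [h2]
      exact Submodule.add_mem _ (hle (k-1) (by omega) h1)
        (hle k hk (Submodule.smul_mem _ _ hw))
  rcases p.hIrr T (fun v hv => hAle hv) (fun v hv => hBle hv) with hbot | htop
  · have := hle 0 (by omega)
    rw [hbot] at this
    have h0 : Fl p 0 ⊓ Gl' p (p.d - 1 - 0) = ⊥ := le_bot_iff.1 this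
    rwa [Fl_zero, Nat.sub_zero] at h0
  · exfalso
    have hTle : T ≤ Gl' p (p.d - 1) :=
      iSup₂_le fun k _ => inf_le_right.trans (Gl'_mono p (by omega))
    rw [htop] at hTle
    have hEvd : p.Ev p.d ≤ Gl' p (p.d - 1) := le_top.trans hTle
    have hrange : Gl' p (p.d - 1) = ⨆ h ∈ Finset.range p.d, p.Ev h := by
      have he : p.d - 1 + 1 = p.d := by omega
      rw [Gl', he]
    have hdisj : Disjoint (p.Ev p.d) (Gl' p (p.d - 1)) := by
      rw [hrange]
      exact disj_Ev p le_rfl _ (fun h hh => by simp only [Finset.mem_range] at hh; omega)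
    exact p.hEv_ne p.d le_rfl (hdisj.eq_bot_of_le hEvd)

lemma tau_d_inj {v : V} (hv : v ∈ p.Ew 0) (h0 : (aeval p.A (tau p.θ p.d)) v = 0) : v = 0 := by
  rcases Nat.eq_zero_or_pos p.d with hd0 | hd
  · simpa [hd0, tau] using h0
  · have hrange : Gl' p (p.d - 1) = ⨆ h ∈ Finset.range p.d, p.Ev h := by
      have he : p.d - 1 + 1 = p.d := by omega
      rw [Gl', he]
    have hsplit : (⊤ : Submodule K V) = p.Ev p.d ⊔ Gl' p (p.d - 1) := by
      rw [← Gl'_top, Gl', Finset.range_add_one, Finset.iSup_insert, hrange]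
    have hvmem : v ∈ p.Ev p.d ⊔ Gl' p (p.d-1) := hsplit ▸ Submodule.mem_top
    obtain ⟨a, ha, b, hb, hab⟩ := Submodule.mem_sup.1 hvmem
    have haev : (aeval p.A (tau p.θ p.d)) a = (tau p.θ p.d).eval (p.θ p.d) • a :=
      aeval_Ev p le_rfl ha _
    have hbev : (aeval p.A (tau p.θ p.d)) b ∈ Gl' p (p.d-1) :=
      Submodule.mem_comap.1 (aeval_Gl' p _ _ hb)
    have hadd : (tau p.θ p.d).eval (p.θ p.d) • a + (aeval p.A (tau p.θ p.d)) b = 0 := by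
      rw [← haev, ← map_add, hab]
      exact h0
    have hsum : (tau p.θ p.d).eval (p.θ p.d) • a = - (aeval p.A (tau p.θ p.d)) b :=
      eq_neg_of_add_eq_zero_left hadd
    have hmem : (tau p.θ p.d).eval (p.θ p.d) • a ∈ p.Ev p.d ⊓ Gl' p (p.d-1) :=
      ⟨Submodule.smul_mem _ _ ha, by rw [hsum]; exact Submodule.neg_mem _ hbev⟩
    have hdisj : p.Ev p.d ⊓ Gl' p (p.d-1) = ⊥ := by
      rw [hrange]
      exact disjoint_iff.1 (disj_Ev p le_rfl _
        (fun h hh => by simp only [Finset.mem_range] at hh; omega))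
    have hevne : (tau p.θ p.d).eval (p.θ p.d) ≠ 0 := by
      rw [tau, eval_prod]
      refine Finset.prod_ne_zero_iff.2 fun k hk => ?_
      simp only [Finset.mem_range] at hk
      simp only [eval_sub, eval_X, eval_C, sub_ne_zero]
      exact fun he => by have := p.hθ_inj p.d le_rfl k (by omega) he; omega
    have ha0 : a = 0 := by
      rw [hdisj] at hmem
      exact (smul_eq_zero.1 ((Submodule.mem_bot K).1 hmem)).resolve_left hevne
    have hvb : v = b := by rw [← hab, ha0, zero_add]
    have hvmem2 : v ∈ p.Ew 0 ⊓ Gl' p (p.d-1) := ⟨hv, hvb ▸ hb⟩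
    rw [cv2 p hd] at hvmem2
    exact (Submodule.mem_bot K).1 hvmem2

lemma u_notin_Gl {v : V} (hv : v ∈ p.Ew 0) (hv0 : v ≠ 0) {i : ℕ} (hi : i ≤ p.d) :
    (aeval p.A (tau p.θ i)) v ∉ Gl p (i+1) := by
  intro hmem
  have hFl : (aeval p.A (tau p.θ i)) v ∈ Fl p i := (u_mem p hv i).1
  have h0 : (aeval p.A (tau p.θ i)) v = 0 :=
    (Submodule.mem_bot K).1 (by rw [← cv1 p i]; exact ⟨hFl, hmem⟩)
  have hprod : tau p.θ p.d = (∏ k ∈ Finset.Ico i p.d, (X - C (p.θ k))) * tau p.θ i := by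
    rw [tau, tau, mul_comm]
    exact (Finset.prod_range_mul_prod_Ico _ hi).symm
  have hz : (aeval p.A (tau p.θ p.d)) v = 0 := by
    rw [hprod, map_mul, Module.End.mul_apply, h0, map_zero]
  exact hv0 (tau_d_inj p hv hz)

lemma u_ne {v : V} (hv : v ∈ p.Ew 0) (hv0 : v ≠ 0) {i : ℕ} (hi : i ≤ p.d) :
    (aeval p.A (tau p.θ i)) v ≠ 0 :=
  fun h0 => u_notin_Gl p hv hv0 hi (h0 ▸ Submodule.zero_mem _)

lemma tau_monic (θf : ℕ → K) (n : ℕ) : (tau θf n).Monic :=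
  monic_prod_of_monic _ _ fun k _ => monic_X_sub_C _

lemma tau_natDegree (θf : ℕ → K) (n : ℕ) : (tau θf n).natDegree = n := by
  rw [tau, natDegree_prod _ _ (fun k _ => X_sub_C_ne_zero _)]
  simp [natDegree_X_sub_C]

lemma tau_degree (θf : ℕ → K) (n : ℕ) : (tau θf n).degree = n := by
  rw [degree_eq_natDegree (tau_monic θf n).ne_zero, tau_natDegree]

lemma tau_dvd {f : K[X]} : ∀ n, n ≤ p.d + 1 → (∀ h, h < n → f.eval (p.θ h) = 0) →
    tau p.θ n ∣ f := by
  intro n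
  induction n with
  | zero => intro _ _; simpa [tau] using one_dvd f
  | succ n ih =>
      intro hn hroots
      obtain ⟨q, hq⟩ := ih (by omega) (fun h hh => hroots h (by omega))
      have htauval : (tau p.θ n).eval (p.θ n) ≠ 0 := by
        rw [tau, eval_prod]
        refine Finset.prod_ne_zero_iff.2 fun k hk => ?_
        simp only [Finset.mem_range] at hk
        simp only [eval_sub, eval_X, eval_C, sub_ne_zero]
        exact fun he => by have := p.hθ_inj n (by omega) k (by omega) he; omega
      have hqroot : q.eval (p.θ n) = 0 := by
        have hr := hroots n (by omega)
        rw [hq, eval_mul] at hr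
        exact (mul_eq_zero.1 hr).resolve_left htauval
      obtain ⟨r, hr⟩ := dvd_iff_isRoot.2 hqroot
      refine ⟨r, ?_⟩
      rw [hq, hr, tau_succ]
      ring

lemma exists_eval_ne {f : K[X]} (hf : f ≠ 0) (hdeg : f.degree < ((p.d + 1 : ℕ) : WithBot ℕ)) :
    ∃ j, j ≤ p.d ∧ f.eval (p.θ j) ≠ 0 := by
  by_contra hc
  push_neg at hc
  have hall : ∀ h, h < p.d + 1 → f.eval (p.θ h) = 0 := fun h hh => hc h (by omega)
  have hdvd := tau_dvd p (p.d+1) le_rfl hall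
  exact hf (eq_zero_of_dvd_of_degree_lt hdvd (by rw [tau_degree]; exact hdeg))

lemma aeval_ne_zero' {f : K[X]} (hex : ∃ j, j ≤ p.d ∧ f.eval (p.θ j) ≠ 0)
    {v : V} (hv : v ∈ p.Ew 0) (hv0 : v ≠ 0) : (aeval p.A f) v ≠ 0 := by
  classical
  have hexx : ∃ j, f.eval (p.θ j) ≠ 0 := ⟨hex.choose, hex.choose_spec.2⟩
  set j := Nat.find hexx with hj
  have hjne : f.eval (p.θ j) ≠ 0 := Nat.find_spec hexx
  have hjle : j ≤ p.d := (Nat.find_min' hexx hex.choose_spec.2).trans hex.choose_spec.1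
  have hlow : ∀ h, h < j → f.eval (p.θ h) = 0 := fun h hh => by
    have := Nat.find_min hexx hh
    simpa using this
  obtain ⟨q, hq⟩ := tau_dvd p j (by omega) hlow
  have hqne : q.eval (p.θ j) ≠ 0 := by
    intro h0; apply hjne; rw [hq, eval_mul, h0, mul_zero]
  intro h0
  have huG : (aeval p.A (tau p.θ j)) v ∈ Gl p j := (u_mem p hv j).2
  have hq' : f = q * tau p.θ j := by rw [hq, mul_comm]
  rw [hq', map_mul, Module.End.mul_apply] at h0
  set u := (aeval p.A (tau p.θ j)) v with hu
  have hsplit : Gl p j = p.Ev j ⊔ Gl p (j+1) := by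
    rw [Gl, Gl, ← Finset.insert_Ico_add_one_left_eq_Ico (by omega : j < p.d + 1), Finset.iSup_insert]
  obtain ⟨a, ha, b, hb, hab⟩ := Submodule.mem_sup.1 (hsplit ▸ huG)
  have haev : (aeval p.A q) a = q.eval (p.θ j) • a := aeval_Ev p hjle ha q
  have hbev : (aeval p.A q) b ∈ Gl p (j+1) :=
    Submodule.mem_comap.1 (aeval_Gl p q (j+1) hb)
  have hadd : q.eval (p.θ j) • a + (aeval p.A q) b = 0 := by
    rw [← haev, ← map_add, hab]
    exact h0
  have hmem : q.eval (p.θ j) • a ∈ p.Ev j ⊓ Gl p (j+1) :=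
    ⟨Submodule.smul_mem _ _ ha, by
      rw [eq_neg_of_add_eq_zero_left hadd]; exact Submodule.neg_mem _ hbev⟩
  have hdisj : p.Ev j ⊓ Gl p (j+1) = ⊥ := by
    rw [Gl]
    exact disjoint_iff.1 (disj_Ev p hjle _
      (fun h hh => by simp only [Finset.mem_Ico] at hh; omega))
  have ha0 : a = 0 := by
    rw [hdisj] at hmem
    exact (smul_eq_zero.1 ((Submodule.mem_bot K).1 hmem)).resolve_left hqne
  have hub : u ∈ Gl p (j+1) := by
    rw [← hab, ha0, zero_add] at hu ⊢
    exact hb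
  exact u_notin_Gl p hv hv0 hjle hub

lemma sum_U_zero : ∀ (n : ℕ) (z : ℕ → V), (∀ i, i < n → z i ∈ U p i) →
    (∑ i ∈ Finset.range n, z i) = 0 → ∀ i, i < n → z i = 0 := by
  intro n
  induction n with
  | zero => intro z _ _ i hi; omega
  | succ n ih =>
      intro z hz hsum
      have hzn : z n = 0 := by
        rcases Nat.eq_zero_or_pos n with rfl | hn
        · simpa [Finset.sum_range_one] using hsum
        · have h1 : z n = - ∑ i ∈ Finset.range n, z i := by
            rw [Finset.sum_range_succ] at hsum
            exact eq_neg_of_add_eq_zero_right hsum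
          have hFl : z n ∈ Fl p (n-1) := by
            rw [h1]
            refine Submodule.neg_mem _ (Submodule.sum_mem _ fun i hi => ?_)
            simp only [Finset.mem_range] at hi
            exact Fl_mono p (by omega) ((hz i (by omega)).1)
          have hGl : z n ∈ Gl p n := (hz n (by omega)).2
          have hm : z n ∈ Fl p (n-1) ⊓ Gl p ((n-1)+1) :=
            ⟨hFl, by rwa [Nat.sub_add_cancel hn]⟩
          rw [cv1] at hm
          exact (Submodule.mem_bot K).1 hm
      have hsum' : ∑ i ∈ Finset.range n, z i = 0 := by
        rw [Finset.sum_range_succ, hzn, add_zero] at hsum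
        exact hsum
      intro i hi
      rcases eq_or_lt_of_le (Nat.lt_succ_iff.1 hi) with rfl | h
      · exact hzn
      · exact ih z (fun i hi => hz i (by omega)) hsum' i h

lemma tau_repr : ∀ (n : ℕ) (g : K[X]), g.degree < (n : ℕ) →
    ∃ c : ℕ → K, g = ∑ i ∈ Finset.range n, c i • tau p.θ i := by
  intro n
  induction n with
  | zero =>
      intro g hdeg
      refine ⟨0, ?_⟩
      have hg : g = 0 := Polynomial.ext fun m => by
        simpa using (degree_lt_iff_coeff_zero g 0).1 (by simpa using hdeg) m (Nat.zero_le m)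
      simp [hg]
  | succ n ih =>
      intro g hdeg
      set a := g.coeff n with ha
      have htcoeff : (tau p.θ n).coeff n = 1 := by
        have hm := (tau_monic p.θ n).coeff_natDegree
        rwa [tau_natDegree] at hm
      have hdeg' : (g - a • tau p.θ n).degree < (n : ℕ) := by
        rw [degree_lt_iff_coeff_zero]
        intro m hm
        rcases eq_or_lt_of_le hm with rfl | hlt
        · simp only [coeff_sub, coeff_smul, htcoeff, smul_eq_mul, mul_one, ha, sub_self]
        · have h1 : g.coeff m = 0 :=
            (degree_lt_iff_coeff_zero g (n+1)).1 (by exact_mod_cast hdeg) m (by omega)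
          have h2 : (tau p.θ n).coeff m = 0 :=
            coeff_eq_zero_of_degree_lt (by rw [tau_degree]; exact_mod_cast hlt)
          simp [coeff_sub, coeff_smul, h1, h2]
      obtain ⟨c, hc⟩ := ih (g - a • tau p.θ n) hdeg'
      refine ⟨fun i => if i = n then a else c i, ?_⟩
      have hcongr : ∑ i ∈ Finset.range n, (if i = n then a else c i) • tau p.θ i
          = ∑ i ∈ Finset.range n, c i • tau p.θ i :=
        Finset.sum_congr rfl fun i hi => by
          simp only [Finset.mem_range] at hi
          rw [if_neg (by omega)]
      rw [Finset.sum_range_succ, hcongr, ← hc]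
      simp

lemma finrank_Gl' : ∀ j, j ≤ p.d →
    Module.finrank K (Gl' p j) = ∑ i ∈ Finset.range (j+1), Module.finrank K (p.Ev i) := by
  intro j
  induction j with
  | zero => intro _; rw [Gl'_zero, Finset.sum_range_one]
  | succ j ih =>
      intro hj
      have hsplit : Gl' p (j+1) = p.Ev (j+1) ⊔ Gl' p j := by
        rw [Gl', Gl', Finset.range_add_one, Finset.iSup_insert]
      have hdisj : p.Ev (j+1) ⊓ Gl' p j = ⊥ := by
        rw [Gl']
        exact disjoint_iff.1 (disj_Ev p hj _
          (fun h hh => by simp only [Finset.mem_range] at hh; omega))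
      have hfr := Submodule.finrank_sup_add_finrank_inf_eq (p.Ev (j+1)) (Gl' p j)
      rw [hdisj, finrank_bot, add_zero] at hfr
      rw [hsplit, hfr, ih (by omega)]
      conv_rhs => rw [Finset.sum_range_succ]
      omega

lemma finrank_Fl : ∀ j, j ≤ p.d →
    Module.finrank K (Fl p j) = ∑ i ∈ Finset.range (j+1), Module.finrank K (p.Ew i) := by
  intro j
  induction j with
  | zero => intro _; rw [Fl_zero, Finset.sum_range_one]
  | succ j ih =>
      intro hj
      have hsplit : Fl p (j+1) = p.Ew (j+1) ⊔ Fl p j := by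
        rw [Fl, Fl, Finset.range_add_one, Finset.iSup_insert]
      have hdisj : p.Ew (j+1) ⊓ Fl p j = ⊥ := by
        rw [Fl]
        exact disjoint_iff.1 (disj_Ew p hj _
          (fun h hh => by simp only [Finset.mem_range] at hh; omega))
      have hfr := Submodule.finrank_sup_add_finrank_inf_eq (p.Ew (j+1)) (Fl p j)
      rw [hdisj, finrank_bot, add_zero] at hfr
      rw [hsplit, hfr, ih (by omega)]
      conv_rhs => rw [Finset.sum_range_succ]
      omega

lemma finrank_V_Ev :
    Module.finrank K V = ∑ i ∈ Finset.range (p.d+1), Module.finrank K (p.Ev i) := by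
  rw [← finrank_Gl' p p.d le_rfl, Gl'_top, finrank_top]

lemma finrank_V_Ew :
    Module.finrank K V = ∑ i ∈ Finset.range (p.d+1), Module.finrank K (p.Ew i) := by
  rw [← finrank_Fl p p.d le_rfl, Fl_top, finrank_top]

lemma finrank_Ev_pos {i : ℕ} (hi : i ≤ p.d) : 0 < Module.finrank K (p.Ev i) :=
  Nat.pos_of_ne_zero fun h => p.hEv_ne i hi (Submodule.finrank_eq_zero.1 h)

lemma finrank_Ew_pos {i : ℕ} (hi : i ≤ p.d) : 0 < Module.finrank K (p.Ew i) :=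
  Nat.pos_of_ne_zero fun h => p.hEw_ne i hi (Submodule.finrank_eq_zero.1 h)

lemma dim_ge : p.d + 1 ≤ Module.finrank K V := by
  rw [finrank_V_Ev p]
  calc p.d + 1 = ∑ _i ∈ Finset.range (p.d+1), 1 := by
        rw [Finset.sum_const, Finset.card_range, smul_eq_mul, mul_one]
    _ ≤ ∑ i ∈ Finset.range (p.d+1), Module.finrank K (p.Ev i) :=
        Finset.sum_le_sum fun i hi =>
          finrank_Ev_pos p (by simp only [Finset.mem_range] at hi; omega)

end TDPaux

open TDPaux in
theorem stmt13 {K V : Type*} [Field K] [AddCommGroup V] [Module K V]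
    [FiniteDimensional K V] (hpos : 0 < Module.finrank K V)
    (p : TridiagonalPair K V) :
    (∃ X : Module.End K V, X ∈ Algebra.adjoin K {p.A} ∧ X ≠ 0 ∧
      ∀ v ∈ p.Ew 0, X v ∈ p.Ew p.d) ↔
    (∀ i ≤ p.d, Module.finrank K (p.Ev i) = 1 ∧
      Module.finrank K (p.Ew i) = 1) := by
  classical
  constructor
  · rintro ⟨X, hXadj, hX0, hXmap⟩
    rw [Algebra.adjoin_singleton_eq_range_aeval] at hXadj
    obtain ⟨F, hF⟩ := hXadj
    have hmmonic : (tau p.θ (p.d + 1)).Monic := tau_monic p.θ _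
    set f : K[X] := F %ₘ (tau p.θ (p.d + 1)) with hf
    have hfX : aeval p.A f = X := by
      have hdecomp := modByMonic_add_div F (tau p.θ (p.d + 1))
      have h2 : aeval p.A (F %ₘ (tau p.θ (p.d+1)) + (tau p.θ (p.d+1)) * (F /ₘ (tau p.θ (p.d+1)))) = X := by
        rw [hdecomp]; exact hF
      rwa [map_add, map_mul, aeval_tau_top, zero_mul, add_zero] at h2
    have hfdeg : f.degree < ((p.d+1 : ℕ) : WithBot ℕ) := by
      have hlt := degree_modByMonic_lt F hmmonic
      rwa [tau_degree] at hlt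
    have hfne : f ≠ 0 := fun h => hX0 (by rw [← hfX, h, map_zero])
    obtain ⟨c, hcf⟩ := tau_repr p (p.d+1) f hfdeg
    obtain ⟨v, hv, hv0⟩ := (Submodule.ne_bot_iff _).1 (p.hEw_ne 0 (Nat.zero_le _))
    set u : ℕ → V := fun i => (aeval p.A (tau p.θ i)) v with hu
    have huU : ∀ i, u i ∈ U p i := fun i => u_mem p hv i
    have hw : X v ∈ p.Ew p.d := hXmap v hv
    have hwsum : X v = ∑ i ∈ Finset.range (p.d+1), c i • u i := by
      rw [← hfX, hcf, map_sum, LinearMap.sum_apply]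
      exact Finset.sum_congr rfl fun i _ => by rw [map_smul, LinearMap.smul_apply]
    have hwne : X v ≠ 0 := by
      rw [← hfX]
      exact aeval_ne_zero' p (exists_eval_ne p hfne hfdeg) hv hv0
    have hu0 : u 0 = v := by simp [hu, tau]
    have hud1 : u (p.d + 1) = 0 := by
      have : u (p.d+1) = (aeval p.A (tau p.θ (p.d+1))) v := rfl
      rw [this, aeval_tau_top]
      rfl
    have hAu : ∀ i, p.A (u i) = u (i+1) + p.θ i • u i := by
      intro i
      have h := aeval_tau_succ p i v
      simp only [LinearMap.sub_apply, LinearMap.smul_apply, Module.End.one_apply] at h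
      have h2 : u (i+1) = p.A (u i) - p.θ i • u i := h
      rw [h2]; abel
    have hcd : c p.d ≠ 0 := by
      intro hcd0
      apply hwne
      rcases Nat.eq_zero_or_pos p.d with hd0 | hd
      · rw [hwsum, hd0, Finset.sum_range_one, show c 0 = 0 from hd0 ▸ hcd0, zero_smul]
      · exfalso
        have hwFl : X v ∈ Fl p (p.d - 1) := by
          rw [hwsum, Finset.range_add_one, Finset.sum_insert Finset.notMem_range_self,
            hcd0, zero_smul, zero_add]
          refine Submodule.sum_mem _ fun i hi => ?_
          simp only [Finset.mem_range] at hi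
          exact Fl_mono p (by omega) (Submodule.smul_mem _ _ (huU i).1)
        have hdisj : p.Ew p.d ⊓ Fl p (p.d - 1) = ⊥ := by
          have he : p.d - 1 + 1 = p.d := by omega
          rw [Fl, he]
          exact disjoint_iff.1 (disj_Ew p le_rfl _
            (fun h hh => by simp only [Finset.mem_range] at hh; omega))
        have := Submodule.mem_inf.2 ⟨hw, hwFl⟩
        rw [hdisj] at this
        exact hwne ((Submodule.mem_bot K).1 this)
    have hBw : p.B (X v) = p.θ' p.d • (X v) := (mem_Ew p le_rfl).1 hw
    set z : ℕ → V := fun i => (p.θ' i - p.θ' p.d) • (c i • u i) +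
        c (i+1) • ((p.B - p.θ' (i+1) • 1) (u (i+1))) with hz
    have hzU : ∀ i, i < p.d → z i ∈ U p i := by
      intro i hi
      refine Submodule.add_mem _
        (Submodule.smul_mem _ _ (Submodule.smul_mem _ _ (huU i))) (Submodule.smul_mem _ _ ?_)
      have hl := U_lower p (i+1) (u (i+1)) (huU (i+1))
      simpa using hl
    have hexp : ∀ i, c i • (p.B (u i)) - p.θ' p.d • (c i • u i)
        = c i • ((p.B - p.θ' i • 1) (u i)) + (p.θ' i - p.θ' p.d) • (c i • u i) := by
      intro i
      simp only [LinearMap.sub_apply, LinearMap.smul_apply, Module.End.one_apply]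
      module
    have htotal : ∑ i ∈ Finset.range (p.d+1),
        (c i • ((p.B - p.θ' i • 1) (u i)) + (p.θ' i - p.θ' p.d) • (c i • u i)) = 0 := by
      have hB : p.B (X v) = ∑ i ∈ Finset.range (p.d+1), c i • p.B (u i) := by
        rw [hwsum, map_sum]
        exact Finset.sum_congr rfl fun i _ => by rw [map_smul]
      have hS : p.θ' p.d • (X v) = ∑ i ∈ Finset.range (p.d+1), p.θ' p.d • (c i • u i) := by
        rw [hwsum, Finset.smul_sum]
      have h1 : ∑ i ∈ Finset.range (p.d+1), (c i • (p.B (u i)) - p.θ' p.d • (c i • u i)) = 0 := by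
        rw [Finset.sum_sub_distrib, ← hB, ← hS, hBw, sub_self]
      rw [← h1]
      exact Finset.sum_congr rfl fun i _ => (hexp i).symm
    have hzsum : ∑ i ∈ Finset.range p.d, z i = 0 := by
      have hg0 : c 0 • ((p.B - p.θ' 0 • 1) (u 0)) = 0 := by
        rw [hu0]
        simp only [LinearMap.sub_apply, LinearMap.smul_apply, Module.End.one_apply]
        rw [(mem_Ew p (Nat.zero_le _)).1 hv, sub_self, smul_zero]
      rw [Finset.sum_add_distrib,
        Finset.sum_range_succ' (fun i => c i • ((p.B - p.θ' i • 1) (u i))) p.d,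
        Finset.sum_range_succ (fun i => (p.θ' i - p.θ' p.d) • (c i • u i)) p.d,
        hg0, add_zero, sub_self, zero_smul, add_zero] at htotal
      calc ∑ i ∈ Finset.range p.d, z i
          = ∑ i ∈ Finset.range p.d, ((p.θ' i - p.θ' p.d) • (c i • u i))
            + ∑ i ∈ Finset.range p.d, c (i+1) • ((p.B - p.θ' (i+1) • 1) (u (i+1))) := by
            rw [← Finset.sum_add_distrib]
        _ = 0 := by rw [add_comm]; exact htotal
    have hzz : ∀ i, i < p.d → z i = 0 := sum_U_zero p p.d z hzU hzsum
    have hrec : ∀ i, i < p.d → c (i+1) • ((p.B - p.θ' (i+1) • 1) (u (i+1)))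
        = (p.θ' p.d - p.θ' i) • (c i • u i) := by
      intro i hi
      have h1 := hzz i hi
      have h2 := eq_neg_of_add_eq_zero_right h1
      rw [h2, ← neg_smul, neg_sub]
    have hspan : ∀ a, a ≤ p.d → (∀ i, a ≤ i → i ≤ p.d → c i ≠ 0) →
        ((p.B - p.θ' a • 1) (u a) = 0) → Module.finrank K V ≤ p.d + 1 - a := by
      intro a had hcne hBa
      set W : Submodule K V := Submodule.span K ↑((Finset.Icc a p.d).image u) with hW
      have humem : ∀ i, a ≤ i → i ≤ p.d → u i ∈ W := fun i h1 h2 =>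
        Submodule.subset_span (by
          simp only [Finset.coe_image, Set.mem_image, Finset.mem_coe, Finset.mem_Icc]
          exact ⟨i, ⟨h1, h2⟩, rfl⟩)
      have hAW : ∀ w ∈ W, p.A w ∈ W := by
        have hle : W ≤ W.comap p.A := by
          rw [hW, Submodule.span_le]
          intro x hx
          simp only [Finset.coe_image, Set.mem_image, Finset.mem_coe, Finset.mem_Icc] at hx
          obtain ⟨i, ⟨hai, hid⟩, rfl⟩ := hx
          simp only [SetLike.mem_coe, Submodule.mem_comap]
          rw [hAu i]
          rcases eq_or_lt_of_le hid with heq | hlt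
          · rw [heq, hud1, zero_add]
            exact Submodule.smul_mem _ _ (humem p.d (heq ▸ hai) le_rfl)
          · exact Submodule.add_mem _ (humem (i+1) (by omega) (by omega))
              (Submodule.smul_mem _ _ (humem i hai hid))
        exact fun w hw => hle hw
      have hBW : ∀ w ∈ W, p.B w ∈ W := by
        have hle : W ≤ W.comap p.B := by
          rw [hW, Submodule.span_le]
          intro x hx
          simp only [Finset.coe_image, Set.mem_image, Finset.mem_coe, Finset.mem_Icc] at hx
          obtain ⟨i, ⟨hai, hid⟩, rfl⟩ := hx
          simp only [SetLike.mem_coe, Submodule.mem_comap]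
          have hBu : p.B (u i) = p.θ' i • u i + (p.B - p.θ' i • 1) (u i) := by
            simp only [LinearMap.sub_apply, LinearMap.smul_apply, Module.End.one_apply]
            abel
          rcases eq_or_lt_of_le hai with heq | hgt
          · rw [hBu, ← heq, hBa, add_zero]
            exact Submodule.smul_mem _ _ (humem a le_rfl (by omega))
          · have hi1 : i - 1 < p.d := by omega
            have hr := hrec (i-1) hi1
            have he : i - 1 + 1 = i := by omega
            rw [he] at hr
            have hci : c i ≠ 0 := hcne i (by omega) hid
            have hBi : (p.B - p.θ' i • 1) (u i)
                = (c i)⁻¹ • ((p.θ' p.d - p.θ' (i-1)) • (c (i-1) • u (i-1))) := by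
              rw [← hr, smul_smul, inv_mul_cancel₀ hci, one_smul]
            rw [hBu, hBi]
            exact Submodule.add_mem _ (Submodule.smul_mem _ _ (humem i (by omega) hid))
              (Submodule.smul_mem _ _ (Submodule.smul_mem _ _
                (Submodule.smul_mem _ _ (humem (i-1) (by omega) (by omega)))))
        exact fun w hw => hle hw
      have hWne : W ≠ ⊥ := by
        intro hWbot
        have hud : u p.d ∈ W := humem p.d had le_rfl
        rw [hWbot] at hud
        exact u_ne p hv hv0 le_rfl ((Submodule.mem_bot K).1 hud)
      have hWtop : W = ⊤ := (p.hIrr W hAW hBW).resolve_left hWne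
      calc Module.finrank K V = Module.finrank K W := by rw [hWtop, finrank_top]
        _ ≤ ((Finset.Icc a p.d).image u).card := by
            rw [hW]; exact finrank_span_finset_le_card _
        _ ≤ (Finset.Icc a p.d).card := Finset.card_image_le
        _ = p.d + 1 - a := Nat.card_Icc a p.d
    by_cases hall : ∀ i, i ≤ p.d → c i ≠ 0
    · have hB0 : (p.B - p.θ' 0 • 1) (u 0) = 0 := by
        rw [hu0]
        simp only [LinearMap.sub_apply, LinearMap.smul_apply, Module.End.one_apply]
        rw [(mem_Ew p (Nat.zero_le _)).1 hv, sub_self]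
      have hfle : Module.finrank K V ≤ p.d + 1 := by
        have hs := hspan 0 (Nat.zero_le _) (fun i _ h2 => hall i h2) hB0
        simpa using hs
      have hge := dim_ge p
      have hfr : Module.finrank K V = p.d + 1 := le_antisymm hfle hge
      have heachV : ∀ i, i ∈ Finset.range (p.d+1) → Module.finrank K (p.Ev i) = 1 := by
        by_contra hcn
        push_neg at hcn
        obtain ⟨i0, hi0, hne1⟩ := hcn
        have hlt : ∑ _i ∈ Finset.range (p.d+1), 1
            < ∑ i ∈ Finset.range (p.d+1), Module.finrank K (p.Ev i) :=
          Finset.sum_lt_sum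
            (fun i hi => finrank_Ev_pos p (by simp only [Finset.mem_range] at hi; omega))
            ⟨i0, hi0, by
              have := finrank_Ev_pos p
                (by simp only [Finset.mem_range] at hi0; omega : i0 ≤ p.d)
              omega⟩
        rw [Finset.sum_const, Finset.card_range, smul_eq_mul, mul_one] at hlt
        rw [← finrank_V_Ev p, hfr] at hlt
        omega
      have heachW : ∀ i, i ∈ Finset.range (p.d+1) → Module.finrank K (p.Ew i) = 1 := by
        by_contra hcn
        push_neg at hcn
        obtain ⟨i0, hi0, hne1⟩ := hcn
        have hlt : ∑ _i ∈ Finset.range (p.d+1), 1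
            < ∑ i ∈ Finset.range (p.d+1), Module.finrank K (p.Ew i) :=
          Finset.sum_lt_sum
            (fun i hi => finrank_Ew_pos p (by simp only [Finset.mem_range] at hi; omega))
            ⟨i0, hi0, by
              have := finrank_Ew_pos p
                (by simp only [Finset.mem_range] at hi0; omega : i0 ≤ p.d)
              omega⟩
        rw [Finset.sum_const, Finset.card_range, smul_eq_mul, mul_one] at hlt
        rw [← finrank_V_Ew p, hfr] at hlt
        omega
      exact fun i hid => ⟨heachV i (Finset.mem_range.2 (by omega)),
        heachW i (Finset.mem_range.2 (by omega))⟩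
    · exfalso
      push_neg at hall
      obtain ⟨t0, ht0d, ht0⟩ := hall
      have ht0' : c t0 = 0 := not_not.1 (by simpa using ht0)
      obtain ⟨t, htle, htzero, hgt⟩ :
          ∃ t, t ≤ p.d ∧ c t = 0 ∧ ∀ i, t < i → i ≤ p.d → c i ≠ 0 :=
        ⟨Nat.findGreatest (fun i => c i = 0) p.d,
          Nat.findGreatest_le (P := fun i => c i = 0) _,
          Nat.findGreatest_spec (P := fun i => c i = 0) ht0d ht0',
          fun i h1 h2 hc0 =>
            Nat.findGreatest_is_greatest (P := fun i => c i = 0) h1 h2 hc0⟩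
      have htne : t ≠ p.d := fun he => hcd (he ▸ htzero)
      have hrt := hrec t (by omega)
      rw [htzero, zero_smul, smul_zero] at hrt
      have hct1 : c (t+1) ≠ 0 := hgt (t+1) (by omega) (by omega)
      have hB1 : (p.B - p.θ' (t+1) • 1) (u (t+1)) = 0 :=
        (smul_eq_zero.1 hrt).resolve_left hct1
      have hs := hspan (t+1) (by omega) (fun i h1 h2 => hgt i (by omega) h2) hB1
      have hge := dim_ge p
      omega
  · intro hdim
    obtain ⟨v, hv, hv0⟩ := (Submodule.ne_bot_iff _).1 (p.hEw_ne 0 (Nat.zero_le _))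
    set u : ℕ → V := fun i => (aeval p.A (tau p.θ i)) v with hu
    have huU : ∀ i, u i ∈ U p i := fun i => u_mem p hv i
    have hfrV : Module.finrank K V = p.d + 1 := by
      rw [finrank_V_Ev p,
        Finset.sum_congr rfl (fun i hi =>
          (hdim i (by simp only [Finset.mem_range] at hi; omega)).1)]
      rw [Finset.sum_const, Finset.card_range, smul_eq_mul, mul_one]
    have hlin : LinearIndependent K (fun i : Fin (p.d+1) => u i) := by
      rw [Fintype.linearIndependent_iff]
      intro g hg
      set zz : ℕ → V := fun i => (if h : i < p.d + 1 then g ⟨i, h⟩ else 0) • u i with hzz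
      have hsum : ∑ i ∈ Finset.range (p.d+1), zz i = 0 := by
        rw [← Fin.sum_univ_eq_sum_range]
        rw [← hg]
        exact Finset.sum_congr rfl fun i _ => by
          simp only [hzz, i.isLt, dif_pos, Fin.eta]
      have hmem : ∀ i, i < p.d+1 → zz i ∈ U p i := fun i _ =>
        Submodule.smul_mem _ _ (huU i)
      have hall := sum_U_zero p (p.d+1) zz hmem hsum
      intro i
      have hz0 := hall i i.isLt
      simp only [hzz, i.isLt, dif_pos, Fin.eta] at hz0
      rcases smul_eq_zero.1 hz0 with h | h
      · exact h
      · exact absurd h (u_ne p hv hv0 (by omega))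
    have hspan : Submodule.span K (Set.range (fun i : Fin (p.d+1) => u i)) = ⊤ := by
      apply Submodule.eq_top_of_finrank_eq
      rw [finrank_span_eq_card hlin, Fintype.card_fin, hfrV]
    obtain ⟨w, hwmem, hw0⟩ := (Submodule.ne_bot_iff _).1 (p.hEw_ne p.d le_rfl)
    have hwspan : w ∈ Submodule.span K (Set.range (fun i : Fin (p.d+1) => u i)) := by
      rw [hspan]; trivial
    obtain ⟨a, haw⟩ := (Submodule.mem_span_range_iff_exists_fun K).1 hwspan
    set g : K[X] := ∑ i : Fin (p.d+1), a i • tau p.θ (i : ℕ) with hg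
    have hXv : (aeval p.A g) v = w := by
      rw [hg, map_sum, LinearMap.sum_apply, ← haw]
      exact Finset.sum_congr rfl fun i _ => by rw [map_smul, LinearMap.smul_apply]
    refine ⟨aeval p.A g, ?_, ?_, ?_⟩
    · rw [Algebra.adjoin_singleton_eq_range_aeval]
      exact ⟨g, rfl⟩
    · intro h0
      apply hw0
      rw [← hXv, h0]
      rfl
    · intro y hy
      have hEw0 : p.Ew 0 = Submodule.span K {v} := by
        have hle : Submodule.span K {v} ≤ p.Ew 0 := Submodule.span_le.2 (by simpa using hv)
        refine (Submodule.eq_of_le_of_finrank_le hle ?_).symm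
        rw [(hdim 0 (Nat.zero_le _)).2, finrank_span_singleton hv0]
      rw [hEw0, Submodule.mem_span_singleton] at hy
      obtain ⟨k, rfl⟩ := hy
      rw [map_smul, hXv]
      exact Submodule.smul_mem _ _ hwmem
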